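/- Let V = (V₁,…,Vₙ) be a vector field on ℝⁿ whose components are homogeneous harmonic polynomials of degree s+1, with div V = 0 and xᵢVᵢ = 0. Define Ŵᵢⱼ = |x|^{2q}(∂ᵢVⱼ + ∂ⱼVᵢ) − s|x|^{2q−2}(xⱼVᵢ + xᵢVⱼ) for q ≥ 1. Then the double divergence vanishes: Ŵᵢⱼ,ᵢⱼ = 0. -/

import Mathlib

/-- The partial derivative `∂ᵢ f` on `ℝⁿ = EuclideanSpace ℝ (Fin n)`. -/
noncomputable def pd (n : ℕ) (i : Fin n) (f : EuclideanSpace ℝ (Fin n) → ℝ)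
    (x : EuclideanSpace ℝ (Fin n)) : ℝ :=
  fderiv ℝ f x (EuclideanSpace.single i 1)

/-- The Euclidean Laplacian `Δf = ∑ᵢ ∂ᵢ∂ᵢ f` on `ℝⁿ`. -/
noncomputable def lap (n : ℕ) (f : EuclideanSpace ℝ (Fin n) → ℝ)
    (x : EuclideanSpace ℝ (Fin n)) : ℝ :=
  ∑ i, pd n i (pd n i f) x

namespace DDW

variable {n : ℕ}

local notation "E" => EuclideanSpace ℝ (Fin n)

lemma pd_congr {f g : E → ℝ} (h : ∀ y, f y = g y) (i : Fin n) (x : E) :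
    pd n i f x = pd n i g x := by
  have : f = g := funext h
  rw [pd, pd, this]

lemma pd_const (c : ℝ) (i : Fin n) (x : E) : pd n i (fun _ => c) x = 0 := by
  simp [pd]

lemma pd_add {f g : E → ℝ} {x : E} (hf : DifferentiableAt ℝ f x)
    (hg : DifferentiableAt ℝ g x) (i : Fin n) :
    pd n i (fun y => f y + g y) x = pd n i f x + pd n i g x := by
  simp [pd, fderiv_fun_add hf hg]

lemma pd_sub {f g : E → ℝ} {x : E} (hf : DifferentiableAt ℝ f x)
    (hg : DifferentiableAt ℝ g x) (i : Fin n) :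
    pd n i (fun y => f y - g y) x = pd n i f x - pd n i g x := by
  simp [pd, fderiv_fun_sub hf hg]

lemma pd_const_mul {f : E → ℝ} {x : E} (hf : DifferentiableAt ℝ f x) (c : ℝ) (i : Fin n) :
    pd n i (fun y => c * f y) x = c * pd n i f x := by
  simp [pd, fderiv_const_mul hf c]

lemma pd_mul {f g : E → ℝ} {x : E} (hf : DifferentiableAt ℝ f x)
    (hg : DifferentiableAt ℝ g x) (i : Fin n) :
    pd n i (fun y => f y * g y) x = pd n i f x * g x + f x * pd n i g x := by
  simp [pd, fderiv_fun_mul hf hg]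
  ring

lemma pd_sum {ι : Type*} {u : Finset ι} {f : ι → E → ℝ} {x : E}
    (h : ∀ k ∈ u, DifferentiableAt ℝ (f k) x) (i : Fin n) :
    pd n i (fun y => ∑ k ∈ u, f k y) x = ∑ k ∈ u, pd n i (f k) x := by
  simp [pd, fderiv_fun_sum h]

lemma pd_pow {f : E → ℝ} {x : E} (hf : DifferentiableAt ℝ f x) (m : ℕ) (i : Fin n) :
    pd n i (fun y => f y ^ m) x = m * f x ^ (m - 1) * pd n i f x := by
  induction m with
  | zero => simpa using pd_const 1 i x
  | succ m ih =>
    have h1 : pd n i (fun y => f y * f y ^ m) x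
        = pd n i f x * f x ^ m + f x * pd n i (fun y => f y ^ m) x :=
      pd_mul hf (hf.pow m) i
    have h2 : pd n i (fun y => f y ^ (m + 1)) x
        = pd n i (fun y => f y * f y ^ m) x := pd_congr (fun y => by ring) i x
    rw [h2, h1, ih]
    rcases Nat.eq_zero_or_pos m with hm | hm
    · subst hm; simp
    · have : m - 1 + 1 = m := Nat.succ_pred_eq_of_pos hm
      rw [show (m+1:ℕ) - 1 = m from rfl, ← this]
      push_cast
      ring

lemma pd_coord (k i : Fin n) (x : E) :
    pd n i (fun y : E => y k) x = if k = i then 1 else 0 := by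
  have h : (fun y : E => y k) = fun y => EuclideanSpace.proj (𝕜 := ℝ) k y := rfl
  rw [pd, h, (EuclideanSpace.proj (𝕜 := ℝ) k).fderiv]
  simp [EuclideanSpace.single_apply]

lemma contDiff_coord (k : Fin n) : ContDiff ℝ (⊤:ℕ∞) (fun y : E => y k) :=
  (EuclideanSpace.proj (𝕜 := ℝ) k).contDiff

lemma contDiff_pd {f : E → ℝ} (h : ContDiff ℝ (⊤:ℕ∞) f) (i : Fin n) :
    ContDiff ℝ (⊤:ℕ∞) (pd n i f) :=
  (h.fderiv_right (by simp)).clm_apply contDiff_const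

lemma diff_of {f : E → ℝ} (h : ContDiff ℝ (⊤:ℕ∞) f) : Differentiable ℝ f :=
  h.differentiable (by simp)

lemma sum_single (x : E) : ∑ k, x k • EuclideanSpace.single k (1:ℝ) = x := by
  ext j
  rw [show ((∑ k, x k • EuclideanSpace.single k (1:ℝ)) j)
      = ∑ k, (x k • EuclideanSpace.single k (1:ℝ)) j from by rw [WithLp.ofLp_sum]; exact Finset.sum_apply j Finset.univ _]
  simp [EuclideanSpace.single_apply]

lemma clm_apply_eq_sum (L : E →L[ℝ] ℝ) (x : E) :
    L x = ∑ k, x k * L (EuclideanSpace.single k 1) := by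
  conv_lhs => rw [← sum_single x]
  rw [map_sum]
  simp [smul_eq_mul]

lemma pd_swap {f : E → ℝ} (hf : ContDiff ℝ (⊤:ℕ∞) f) (i j : Fin n) (x : E) :
    pd n j (pd n i f) x = pd n i (pd n j f) x := by
  have hdf : Differentiable ℝ (fderiv ℝ f) :=
    (hf.fderiv_right (m := (⊤:ℕ∞)) (by exact_mod_cast le_top)).differentiable
      (by simp)
  have key : ∀ v w : E, fderiv ℝ (fderiv ℝ f) x v w = fderiv ℝ (fderiv ℝ f) x w v :=
    second_derivative_symmetric (fun y => ((diff_of hf) y).hasFDerivAt) (hdf x).hasFDerivAt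
  have hrepr : ∀ (a b : Fin n), pd n a (pd n b f) x
      = fderiv ℝ (fderiv ℝ f) x (EuclideanSpace.single a 1) (EuclideanSpace.single b 1) := by
    intro a b
    have h1 : pd n b f
        = ⇑(ContinuousLinearMap.apply ℝ ℝ (EuclideanSpace.single b 1)) ∘ fderiv ℝ f := rfl
    have h2 : HasFDerivAt
        (⇑(ContinuousLinearMap.apply ℝ ℝ (EuclideanSpace.single b 1)) ∘ fderiv ℝ f)
        ((ContinuousLinearMap.apply ℝ ℝ (EuclideanSpace.single b 1)).comp
          (fderiv ℝ (fderiv ℝ f) x)) x :=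
      (ContinuousLinearMap.apply ℝ ℝ (EuclideanSpace.single b 1)).hasFDerivAt.comp x
        (hdf x).hasFDerivAt
    rw [pd, h1, h2.fderiv]
    rfl
  rw [hrepr, hrepr, key]

lemma euler {f : E → ℝ} {d : ℕ} (hf : ContDiff ℝ (⊤:ℕ∞) f)
    (hhom : ∀ (t : ℝ) (x : E), f (t • x) = t ^ d * f x) (x : E) :
    ∑ k, x k * pd n k f x = (d : ℝ) * f x := by
  have h1 : HasDerivAt (fun t : ℝ => f (t • x)) (fderiv ℝ f ((1:ℝ) • x) x) 1 := by
    have hx : HasDerivAt (fun t : ℝ => t • x) ((1:ℝ) • x) 1 := (hasDerivAt_id 1).smul_const x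
    have := ((diff_of hf) ((1:ℝ) • x)).hasFDerivAt.comp_hasDerivAt 1 hx
    simp only [one_smul] at this ⊢; exact this
  have h2 : HasDerivAt (fun t : ℝ => t ^ d * f x) ((d : ℝ) * f x) 1 := by
    simpa using (hasDerivAt_pow d 1).mul_const (f x)
  have h3 : (fun t : ℝ => f (t • x)) = fun t : ℝ => t ^ d * f x := funext fun t => hhom t x
  rw [h3] at h1
  have h4 : fderiv ℝ f ((1:ℝ) • x) x = (d : ℝ) * f x := h1.unique h2
  rw [one_smul] at h4
  calc ∑ k, x k * pd n k f x = fderiv ℝ f x x := (clm_apply_eq_sum (fderiv ℝ f x) x).symm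
  _ = (d : ℝ) * f x := h4

lemma contDiff_S : ContDiff ℝ (⊤:ℕ∞) (fun y : E => ∑ k, y k ^ 2) :=
  ContDiff.sum fun k _ => (contDiff_coord k).pow 2

lemma pd_S (i : Fin n) (y : E) : pd n i (fun z : E => ∑ k, z k ^ 2) y = 2 * y i := by
  rw [pd_sum (f := fun k (z : E) => z k ^ 2) (fun k _ => ((diff_of (contDiff_coord k)) y).pow 2) i]
  have : ∀ k, pd n i (fun z : E => z k ^ 2) y = 2 * y k * (if k = i then 1 else 0) := by
    intro k
    rw [pd_pow ((diff_of (contDiff_coord k)) y) 2 i, pd_coord k i y]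
    norm_num
  rw [Finset.sum_congr rfl fun k _ => this k]
  simp

lemma key (s : ℕ) (V : Fin n → E → ℝ) (hVs : ∀ i, ContDiff ℝ (⊤:ℕ∞) (V i))
    (hdiv : ∀ x, ∑ i, pd n i (V i) x = 0) (hrad : ∀ x, ∑ i, x i * V i x = 0)
    (ψ : Fin n → Fin n → E → ℝ) (hψs : ∀ i j, ContDiff ℝ (⊤:ℕ∞) (ψ i j))
    (hψsymm : ∀ i j, ψ i j = ψ j i) (κ : ℝ)
    (H1 : ∀ y, ∑ i, ψ i i y = 0)
    (H2 : ∀ y, ∑ i, ∑ j, y i * y j * ψ i j y = 0)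
    (H3 : ∀ j y, ∑ i, pd n i (ψ i j) y = κ * V j y) (m : ℕ) (x : E) :
    ∑ i, ∑ j, pd n j (pd n i (fun y => (∑ k, y k ^ 2) ^ m * ψ i j y)) x = 0 := by
  set Sf : E → ℝ := fun y => ∑ k, y k ^ 2 with hSfdef
  have hSf : ContDiff ℝ (⊤:ℕ∞) Sf := contDiff_S
  have dSf : Differentiable ℝ Sf := diff_of hSf
  have dψ : ∀ i j, Differentiable ℝ (ψ i j) := fun i j => diff_of (hψs i j)
  have dpdψ : ∀ i j k, Differentiable ℝ (pd n k (ψ i j)) :=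
    fun i j k => diff_of (contDiff_pd (hψs i j) k)
  have pdSf : ∀ (i : Fin n) (y : E), pd n i Sf y = 2 * y i := pd_S
  -- step 1 : first derivative, pointwise
  have hstep1 : ∀ (i j : Fin n) (y : E), pd n i (fun z => Sf z ^ m * ψ i j z) y
      = (2*(m:ℝ)) * (y i * (Sf y ^ (m-1) * ψ i j y)) + Sf y ^ m * pd n i (ψ i j) y := by
    intro i j y
    rw [pd_mul (f := fun z => Sf z ^ m) ((dSf y).pow m) (dψ i j y) i, pd_pow (dSf y) m i, pdSf i y]
    ring
  -- step 2 : second derivative, explicit formula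
  have hstep2 : ∀ (i j : Fin n), pd n j (pd n i (fun z => Sf z ^ m * ψ i j z)) x
      = (if i = j then (1:ℝ) else 0) * (2*(m:ℝ) * (Sf x ^ (m-1) * ψ i j x))
        + (4*(m:ℝ)*((m-1:ℕ):ℝ)) * (x i * (x j * (Sf x ^ (m-2) * ψ i j x)))
        + (2*(m:ℝ)) * (x i * (Sf x ^ (m-1) * pd n j (ψ i j) x))
        + (2*(m:ℝ)) * (x j * (Sf x ^ (m-1) * pd n i (ψ i j) x))
        + Sf x ^ m * pd n j (pd n i (ψ i j)) x := by
    intro i j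
    rw [pd_congr (hstep1 i j) j x]
    have d1 : DifferentiableAt ℝ (fun y : E => Sf y ^ (m-1) * ψ i j y) x :=
      ((dSf x).pow (m-1)).mul (dψ i j x)
    have d2 : DifferentiableAt ℝ (fun y : E => y i * (Sf y ^ (m-1) * ψ i j y)) x :=
      ((diff_of (contDiff_coord i)) x).mul d1
    have d3 : DifferentiableAt ℝ (fun y : E => (2*(m:ℝ)) * (y i * (Sf y ^ (m-1) * ψ i j y))) x :=
      d2.const_mul _
    have d4 : DifferentiableAt ℝ (fun y : E => Sf y ^ m * pd n i (ψ i j) y) x :=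
      ((dSf x).pow m).mul (dpdψ i j i x)
    rw [pd_add d3 d4 j, pd_const_mul d2 (2*(m:ℝ)) j,
        pd_mul ((diff_of (contDiff_coord i)) x) d1 j, pd_coord i j x,
        pd_mul (f := fun y => Sf y ^ (m-1)) ((dSf x).pow (m-1)) (dψ i j x) j, pd_pow (dSf x) (m-1) j,
        pd_mul (f := fun y => Sf y ^ m) ((dSf x).pow m) (dpdψ i j i x) j, pd_pow (dSf x) m j, pdSf j x,
        show m - 1 - 1 = m - 2 by omega]
    push_cast
    ring
  rw [Finset.sum_congr rfl fun i _ => Finset.sum_congr rfl fun j _ => hstep2 i j]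
  simp only [Finset.sum_add_distrib]
  -- five pieces
  have ZA : ∑ i : Fin n, ∑ j : Fin n,
      (if i = j then (1:ℝ) else 0) * (2*(m:ℝ) * (Sf x ^ (m-1) * ψ i j x)) = 0 := by
    have : ∀ i : Fin n, ∑ j : Fin n,
        (if i = j then (1:ℝ) else 0) * (2*(m:ℝ) * (Sf x ^ (m-1) * ψ i j x))
        = 2*(m:ℝ) * (Sf x ^ (m-1) * ψ i i x) := by
      intro i
      rw [Finset.sum_eq_single i]
      · simp
      · intro b _ hb; simp [Ne.symm hb]
      · intro hb; exact absurd (Finset.mem_univ i) hb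
    rw [Finset.sum_congr rfl fun i _ => this i]
    have : ∑ i : Fin n, 2*(m:ℝ) * (Sf x ^ (m-1) * ψ i i x)
        = 2*(m:ℝ) * Sf x ^ (m-1) * ∑ i, ψ i i x := by
      rw [Finset.mul_sum]; exact Finset.sum_congr rfl fun i _ => by ring
    rw [this, H1 x, mul_zero]
  have ZB : ∑ i : Fin n, ∑ j : Fin n,
      (4*(m:ℝ)*((m-1:ℕ):ℝ)) * (x i * (x j * (Sf x ^ (m-2) * ψ i j x))) = 0 := by
    have : ∑ i : Fin n, ∑ j : Fin n,
        (4*(m:ℝ)*((m-1:ℕ):ℝ)) * (x i * (x j * (Sf x ^ (m-2) * ψ i j x)))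
        = (4*(m:ℝ)*((m-1:ℕ):ℝ) * Sf x ^ (m-2)) * ∑ i, ∑ j, x i * x j * ψ i j x := by
      rw [Finset.mul_sum]
      refine Finset.sum_congr rfl fun i _ => ?_
      rw [Finset.mul_sum]
      exact Finset.sum_congr rfl fun j _ => by ring
    rw [this, H2 x, mul_zero]
  have hcol : ∀ i : Fin n, ∑ j, pd n j (ψ i j) x = κ * V i x := by
    intro i
    have : ∀ j : Fin n, pd n j (ψ i j) x = pd n j (ψ j i) x := fun j => by rw [hψsymm i j]
    rw [Finset.sum_congr rfl fun j _ => this j, H3 i x]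
  have ZC : ∑ i : Fin n, ∑ j : Fin n,
      (2*(m:ℝ)) * (x i * (Sf x ^ (m-1) * pd n j (ψ i j) x)) = 0 := by
    have : ∀ i : Fin n, ∑ j : Fin n,
        (2*(m:ℝ)) * (x i * (Sf x ^ (m-1) * pd n j (ψ i j) x))
        = (2*(m:ℝ) * Sf x ^ (m-1) * κ) * (x i * V i x) := by
      intro i
      have h1 : ∑ j : Fin n, (2*(m:ℝ)) * (x i * (Sf x ^ (m-1) * pd n j (ψ i j) x))
          = (2*(m:ℝ) * x i * Sf x ^ (m-1)) * ∑ j, pd n j (ψ i j) x := by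
        rw [Finset.mul_sum]; exact Finset.sum_congr rfl fun j _ => by ring
      rw [h1, hcol i]; ring
    rw [Finset.sum_congr rfl fun i _ => this i, ← Finset.mul_sum, hrad x, mul_zero]
  have ZD : ∑ i : Fin n, ∑ j : Fin n,
      (2*(m:ℝ)) * (x j * (Sf x ^ (m-1) * pd n i (ψ i j) x)) = 0 := by
    rw [Finset.sum_comm]
    have : ∀ j : Fin n, ∑ i : Fin n,
        (2*(m:ℝ)) * (x j * (Sf x ^ (m-1) * pd n i (ψ i j) x))
        = (2*(m:ℝ) * Sf x ^ (m-1) * κ) * (x j * V j x) := by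
      intro j
      have h1 : ∑ i : Fin n, (2*(m:ℝ)) * (x j * (Sf x ^ (m-1) * pd n i (ψ i j) x))
          = (2*(m:ℝ) * x j * Sf x ^ (m-1)) * ∑ i, pd n i (ψ i j) x := by
        rw [Finset.mul_sum]; exact Finset.sum_congr rfl fun i _ => by ring
      rw [h1, H3 j x]; ring
    rw [Finset.sum_congr rfl fun j _ => this j, ← Finset.mul_sum, hrad x, mul_zero]
  have ZE : ∑ i : Fin n, ∑ j : Fin n, Sf x ^ m * pd n j (pd n i (ψ i j)) x = 0 := by
    rw [Finset.sum_comm]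
    have : ∀ j : Fin n, ∑ i : Fin n, Sf x ^ m * pd n j (pd n i (ψ i j)) x
        = Sf x ^ m * (κ * pd n j (V j) x) := by
      intro j
      rw [← Finset.mul_sum, ← pd_sum (fun i _ => (dpdψ i j i) x) j,
          pd_congr (H3 j) j x, pd_const_mul ((diff_of (hVs j)) x) κ j]
    rw [Finset.sum_congr rfl fun j _ => this j]
    have : ∑ j : Fin n, Sf x ^ m * (κ * pd n j (V j) x)
        = (Sf x ^ m * κ) * ∑ j, pd n j (V j) x := by
      rw [Finset.mul_sum]; exact Finset.sum_congr rfl fun j _ => by ring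
    rw [this, hdiv x, mul_zero]
  rw [ZA, ZB, ZC, ZD, ZE]
  norm_num

lemma norm_pow_even (m : ℕ) (y : E) : ‖y‖ ^ (2*m) = (∑ k, y k ^ 2) ^ m := by
  rw [pow_mul]
  congr 1
  rw [EuclideanSpace.norm_eq, Real.sq_sqrt (by positivity)]
  simp [Real.norm_eq_abs, sq_abs]

end DDW


open DDW

/-- Let `V = (V₁,…,Vₙ)` be a vector field on `ℝⁿ` whose components are homogeneous
harmonic polynomials of degree `s+1`, with `div V = 0` and `xᵢVᵢ = 0`. Define
`Ŵᵢⱼ = |x|^{2q}(∂ᵢVⱼ + ∂ⱼVᵢ) − s|x|^{2q−2}(xⱼVᵢ + xᵢVⱼ)` for `q ≥ 1`. Then the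
double divergence vanishes: `Ŵᵢⱼ,ᵢⱼ = 0`. -/
theorem double_divergence_W_vanishes (n s q : ℕ) (hn : 2 ≤ n) (hs : 1 ≤ s) (hq : 1 ≤ q)
    (V : Fin n → EuclideanSpace ℝ (Fin n) → ℝ)
    (hsmooth : ∀ i, ContDiff ℝ (⊤ : ℕ∞) (V i))
    (hhom : ∀ i, ∀ (t : ℝ) (x : EuclideanSpace ℝ (Fin n)), V i (t • x) = t ^ (s + 1) * V i x)
    (hharm : ∀ i x, lap n (V i) x = 0)
    (hdiv : ∀ x, ∑ i, pd n i (V i) x = 0)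
    (hrad : ∀ x, ∑ i, x i * V i x = 0)
    (W : EuclideanSpace ℝ (Fin n) → Fin n → Fin n → ℝ)
    (hW : ∀ x, ∀ i j, W x i j
      = ‖x‖ ^ (2 * q) * (pd n i (V j) x + pd n j (V i) x)
        - (s : ℝ) * ‖x‖ ^ (2 * q - 2) * (x j * V i x + x i * V j x)) :
    ∀ x, ∑ i, ∑ j, pd n j (pd n i (fun y => W y i j)) x = 0 := by
  intro x
  set Sf : EuclideanSpace ℝ (Fin n) → ℝ := fun y => ∑ k, y k ^ 2 with hSfdef
  set A : Fin n → Fin n → EuclideanSpace ℝ (Fin n) → ℝ := fun i j y => pd n i (V j) y + pd n j (V i) y with hAdef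
  set B : Fin n → Fin n → EuclideanSpace ℝ (Fin n) → ℝ := fun i j y => y j * V i y + y i * V j y with hBdef
  have dV : ∀ i, Differentiable ℝ (V i) := fun i => diff_of (hsmooth i)
  have dpdV : ∀ i k, Differentiable ℝ (pd n k (V i)) :=
    fun i k => diff_of (contDiff_pd (hsmooth i) k)
  have hA_cd : ∀ i j, ContDiff ℝ (⊤:ℕ∞) (A i j) :=
    fun i j => (contDiff_pd (hsmooth j) i).add (contDiff_pd (hsmooth i) j)
  have hB_cd : ∀ i j, ContDiff ℝ (⊤:ℕ∞) (B i j) :=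
    fun i j => ((contDiff_coord j).mul (hsmooth i)).add ((contDiff_coord i).mul (hsmooth j))
  have heuler : ∀ i (y : EuclideanSpace ℝ (Fin n)), ∑ k, y k * pd n k (V i) y = ((s:ℝ)+1) * V i y := by
    intro i y
    have := euler (hsmooth i) (hhom i) y
    push_cast at this
    exact this
  -- rewrite W in terms of Sf, A, B
  have hWfun : ∀ (i j : Fin n) (y : EuclideanSpace ℝ (Fin n)),
      W y i j = Sf y ^ q * A i j y - (s:ℝ) * (Sf y ^ (q-1) * B i j y) := by
    intro i j y
    rw [hW y i j]
    have h1 : ‖y‖ ^ (2*q) = Sf y ^ q := norm_pow_even q y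
    have h2 : ‖y‖ ^ (2*q-2) = Sf y ^ (q-1) := by
      rw [show 2*q-2 = 2*(q-1) by omega]; exact norm_pow_even (q-1) y
    rw [h1, h2]
    ring
  -- split the double derivative
  have hsplit : ∀ (i j : Fin n), pd n j (pd n i (fun y => W y i j)) x
      = pd n j (pd n i (fun y => Sf y ^ q * A i j y)) x
        - (s:ℝ) * pd n j (pd n i (fun y => Sf y ^ (q-1) * B i j y)) x := by
    intro i j
    have dSA : Differentiable ℝ (fun y : EuclideanSpace ℝ (Fin n) => Sf y ^ q * A i j y) :=
      diff_of ((contDiff_S.pow q).mul (hA_cd i j))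
    have dSB : Differentiable ℝ (fun y : EuclideanSpace ℝ (Fin n) => Sf y ^ (q-1) * B i j y) :=
      diff_of ((contDiff_S.pow (q-1)).mul (hB_cd i j))
    have step1 : ∀ (y : EuclideanSpace ℝ (Fin n)), pd n i (fun z => W z i j) y
        = pd n i (fun z => Sf z ^ q * A i j z) y
          - (s:ℝ) * pd n i (fun z => Sf z ^ (q-1) * B i j z) y := by
      intro y
      rw [pd_congr (fun z => hWfun i j z) i y,
        pd_sub (dSA y) ((dSB y).const_mul (s:ℝ)) i, pd_const_mul (dSB y) (s:ℝ) i]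
    rw [pd_congr step1 j x]
    have dpdSA : Differentiable ℝ (pd n i (fun z : EuclideanSpace ℝ (Fin n) => Sf z ^ q * A i j z)) :=
      diff_of (contDiff_pd ((contDiff_S.pow q).mul (hA_cd i j)) i)
    have dpdSB : Differentiable ℝ (pd n i (fun z : EuclideanSpace ℝ (Fin n) => Sf z ^ (q-1) * B i j z)) :=
      diff_of (contDiff_pd ((contDiff_S.pow (q-1)).mul (hB_cd i j)) i)
    rw [pd_sub (dpdSA x) ((dpdSB x).const_mul (s:ℝ)) j, pd_const_mul (dpdSB x) (s:ℝ) j]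
  rw [Finset.sum_congr rfl fun i _ => Finset.sum_congr rfl fun j _ => hsplit i j]
  simp only [Finset.sum_sub_distrib, ← Finset.mul_sum]
  -- part A via key
  have HA : ∑ i, ∑ j, pd n j (pd n i (fun y => Sf y ^ q * A i j y)) x = 0 := by
    apply key s V hsmooth hdiv hrad A hA_cd
      (fun i j => funext fun y => add_comm _ _) 0
    · intro y
      rw [Finset.sum_add_distrib]
      simp [hdiv y]
    · intro y
      have hsummand : ∀ (i j : Fin n), y i * y j * A i j y
          = y i * y j * pd n i (V j) y + y i * y j * pd n j (V i) y := fun i j => by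
        simp only [hAdef]; ring
      rw [Finset.sum_congr rfl fun i _ => Finset.sum_congr rfl fun j _ => hsummand i j]
      simp only [Finset.sum_add_distrib]
      have T1 : ∑ i : Fin n, ∑ j : Fin n, y i * y j * pd n i (V j) y = 0 := by
        rw [Finset.sum_comm]
        have : ∀ j : Fin n, ∑ i : Fin n, y i * y j * pd n i (V j) y
            = ((s:ℝ)+1) * (y j * V j y) := by
          intro j
          have : ∑ i : Fin n, y i * y j * pd n i (V j) y
              = y j * ∑ i, y i * pd n i (V j) y := by
            rw [Finset.mul_sum]; exact Finset.sum_congr rfl fun i _ => by ring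
          rw [this, heuler j y]; ring
        rw [Finset.sum_congr rfl fun j _ => this j, ← Finset.mul_sum, hrad y, mul_zero]
      have T2 : ∑ i : Fin n, ∑ j : Fin n, y i * y j * pd n j (V i) y = 0 := by
        have : ∀ i : Fin n, ∑ j : Fin n, y i * y j * pd n j (V i) y
            = ((s:ℝ)+1) * (y i * V i y) := by
          intro i
          have : ∑ j : Fin n, y i * y j * pd n j (V i) y
              = y i * ∑ j, y j * pd n j (V i) y := by
            rw [Finset.mul_sum]; exact Finset.sum_congr rfl fun j _ => by ring
          rw [this, heuler i y]; ring
        rw [Finset.sum_congr rfl fun i _ => this i, ← Finset.mul_sum, hrad y, mul_zero]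
      rw [T1, T2, add_zero]
    · intro j y
      have hterm : ∀ i : Fin n, pd n i (A i j) y
          = pd n i (pd n i (V j)) y + pd n j (pd n i (V i)) y := by
        intro i
        have : pd n i (A i j) y
            = pd n i (pd n i (V j)) y + pd n i (pd n j (V i)) y :=
          pd_add (dpdV j i y) (dpdV i j y) i
        rw [this, pd_swap (hsmooth i) j i y]
      rw [Finset.sum_congr rfl fun i _ => hterm i, Finset.sum_add_distrib]
      have e1 : ∑ i : Fin n, pd n i (pd n i (V j)) y = 0 := hharm j y
      have e2 : ∑ i : Fin n, pd n j (pd n i (V i)) y = 0 := by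
        rw [← pd_sum (fun i _ => (dpdV i i) y) j, pd_congr hdiv j y, pd_const 0 j y]
      rw [e1, e2]
      simp
  -- part B via key
  have HB : ∑ i, ∑ j, pd n j (pd n i (fun y => Sf y ^ (q-1) * B i j y)) x = 0 := by
    apply key s V hsmooth hdiv hrad B hB_cd
      (fun i j => funext fun y => add_comm _ _) ((n:ℝ)+(s:ℝ)+2)
    · intro y
      have : ∀ i : Fin n, B i i y = 2 * (y i * V i y) := fun i => by
        simp only [hBdef]; ring
      rw [Finset.sum_congr rfl fun i _ => this i, ← Finset.mul_sum, hrad y, mul_zero]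
    · intro y
      have hsummand : ∀ (i j : Fin n), y i * y j * B i j y
          = y i * y j * (y j * V i y) + y i * y j * (y i * V j y) := fun i j => by
        simp only [hBdef]; ring
      rw [Finset.sum_congr rfl fun i _ => Finset.sum_congr rfl fun j _ => hsummand i j]
      simp only [Finset.sum_add_distrib]
      have T1 : ∑ i : Fin n, ∑ j : Fin n, y i * y j * (y j * V i y) = 0 := by
        have : ∀ i : Fin n, ∑ j : Fin n, y i * y j * (y j * V i y)
            = (y i * V i y) * ∑ j, y j ^ 2 := by
          intro i
          rw [Finset.mul_sum]; exact Finset.sum_congr rfl fun j _ => by ring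
        rw [Finset.sum_congr rfl fun i _ => this i, ← Finset.sum_mul, hrad y, zero_mul]
      have T2 : ∑ i : Fin n, ∑ j : Fin n, y i * y j * (y i * V j y) = 0 := by
        have : ∀ i : Fin n, ∑ j : Fin n, y i * y j * (y i * V j y)
            = y i ^ 2 * ∑ j, y j * V j y := by
          intro i
          rw [Finset.mul_sum]; exact Finset.sum_congr rfl fun j _ => by ring
        rw [Finset.sum_congr rfl fun i _ => this i]
        simp [hrad y]
      rw [T1, T2, add_zero]
    · intro j y
      have hterm : ∀ i : Fin n, pd n i (B i j) y
          = ((if j = i then (1:ℝ) else 0) * V i y + y j * pd n i (V i) y)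
            + (V j y + y i * pd n i (V j) y) := by
        intro i
        have h1 : pd n i (B i j) y
            = pd n i (fun z : EuclideanSpace ℝ (Fin n) => z j * V i z) y
              + pd n i (fun z : EuclideanSpace ℝ (Fin n) => z i * V j z) y :=
          pd_add ((diff_of ((contDiff_coord j).mul (hsmooth i))) y)
            ((diff_of ((contDiff_coord i).mul (hsmooth j))) y) i
        rw [h1, pd_mul ((diff_of (contDiff_coord j)) y) (dV i y) i,
          pd_mul ((diff_of (contDiff_coord i)) y) (dV j y) i,
          pd_coord j i y, pd_coord i i y]
        simp
      rw [Finset.sum_congr rfl fun i _ => hterm i, Finset.sum_add_distrib,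
        Finset.sum_add_distrib, Finset.sum_add_distrib]
      have e1 : ∑ i : Fin n, (if j = i then (1:ℝ) else 0) * V i y = V j y := by
        rw [Finset.sum_eq_single j]
        · simp
        · intro b _ hb; simp [Ne.symm hb]
        · intro hb; exact absurd (Finset.mem_univ j) hb
      have e2 : ∑ i : Fin n, y j * pd n i (V i) y = 0 := by
        rw [← Finset.mul_sum, hdiv y, mul_zero]
      have e3 : ∑ _i : Fin n, V j y = (n:ℝ) * V j y := by
        simp [Finset.sum_const, mul_comm]
      have e4 : ∑ i : Fin n, y i * pd n i (V j) y = ((s:ℝ)+1) * V j y := heuler j y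
      rw [e1, e2, e3, e4]
      ring
  rw [HA, HB]
  simp
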